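/- (First derivative test) Let F, G be real functions on [a,b] with G continuous, |G(x)| ≤ H on [a,b], F continuously differentiable, G/F' monotone, and F'(x) ≥ h > 0 for all x in [a,b] (or F'(x) ≤ −h < 0 for all x). Then |∫_a^b G(x)·e(F(x)) dx| ≪ H/h, with an absolute implied constant. -/

import Mathlib

open MeasureTheory Set Complex

private lemma expderiv {f : ℝ → ℝ} {d x : ℝ} (h : HasDerivAt f d x) :
    HasDerivAt (fun y => Complex.exp (2 * Real.pi * Complex.I * (f y : ℂ)) /
        (2 * Real.pi * Complex.I))
      ((d : ℂ) * Complex.exp (2 * Real.pi * Complex.I * (f x : ℂ))) x := by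
  have h1 : HasDerivAt (fun y => ((f y : ℝ) : ℂ)) d x := h.ofReal_comp
  have h2 := (h1.const_mul (2 * Real.pi * Complex.I)).cexp.div_const (2 * Real.pi * Complex.I)
  convert h2 using 1
  have hne : (2 * (Real.pi : ℂ) * Complex.I) ≠ 0 := by
    simp [Real.pi_ne_zero, Complex.I_ne_zero]
  case e'_4 => rfl
  field_simp

private lemma key (a b H h : ℝ) (F F' G : ℝ → ℝ) (hab : a < b) (hH : 0 < H) (hh : 0 < h)
    (hGc : ContinuousOn G (Set.Icc a b))
    (hGb : ∀ x ∈ Set.Icc a b, |G x| ≤ H)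
    (hF : ∀ x ∈ Set.Icc a b, HasDerivAt F (F' x) x)
    (hF'c : ContinuousOn F' (Set.Icc a b))
    (hmono : MonotoneOn (fun x => G x / F' x) (Set.Icc a b))
    (hpos : ∀ x ∈ Set.Icc a b, h ≤ F' x) :
    ‖∫ x in a..b, (G x : ℂ) * Complex.exp (2 * Real.pi * Complex.I * (F x))‖ ≤ 3 * H / h := by
  set c : ℝ → ℝ := fun x => max a (min x b) with hc
  have hcmem : ∀ x, c x ∈ Set.Icc a b :=
    fun x => ⟨le_max_left _ _, max_le hab.le (min_le_right _ _)⟩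
  have hcid : ∀ x ∈ Set.Icc a b, c x = x := by
    intro x hx
    simp only [hc]
    rw [min_eq_left hx.2, max_eq_right hx.1]
  have hcmono : Monotone c := fun x y hxy => max_le_max le_rfl (min_le_min_right _ hxy)
  have hccont : Continuous c := continuous_const.max (continuous_id.min continuous_const)
  have hFc : ContinuousOn F (Set.Icc a b) :=
    fun x hx => ((hF x hx).continuousAt).continuousWithinAt
  have hF'pos : ∀ x, (0:ℝ) < F' (c x) := fun x => lt_of_lt_of_le hh (hpos _ (hcmem x))
  set φ : ℝ → ℝ := fun x => G (c x) / F' (c x) with hφ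
  set ψ : ℝ → ℂ := fun x =>
    (F' (c x) : ℂ) * Complex.exp (2 * Real.pi * Complex.I * (F (c x) : ℂ)) with hψ
  have hφmono : Monotone φ := fun x y hxy => hmono (hcmem x) (hcmem y) (hcmono hxy)
  have hφcont : Continuous φ := by
    apply Continuous.div (hGc.comp_continuous hccont hcmem) (hF'c.comp_continuous hccont hcmem)
    exact fun x => (hF'pos x).ne'
  have hψcont : Continuous ψ := by
    apply Continuous.mul
    · exact Complex.continuous_ofReal.comp (hF'c.comp_continuous hccont hcmem)
    · exact Complex.continuous_exp.comp (continuous_const.mul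
        (Complex.continuous_ofReal.comp (hFc.comp_continuous hccont hcmem)))
  have hφb : ∀ x, |φ x| ≤ H / h := by
    intro x
    rw [hφ, abs_div]
    apply div_le_div₀ (le_of_lt hH) (hGb _ (hcmem x)) hh
    rw [abs_of_pos (hF'pos x)]
    exact hpos _ (hcmem x)
  -- FTC bound
  have hFTC : ∀ u ∈ Set.Icc a b, ∀ v ∈ Set.Icc a b,
      ∫ x in u..v, ψ x = Complex.exp (2 * Real.pi * Complex.I * (F v : ℂ)) /
        (2 * Real.pi * Complex.I) -
        Complex.exp (2 * Real.pi * Complex.I * (F u : ℂ)) / (2 * Real.pi * Complex.I) := by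
    intro u hu v hv
    apply intervalIntegral.integral_eq_sub_of_hasDerivAt
    · intro x hx
      have hx' : x ∈ Set.Icc a b := by
        exact Set.uIcc_subset_Icc hu hv hx
      have := expderiv (hF x hx')
      simpa [hψ, hcid x hx'] using this
    · exact hψcont.intervalIntegrable u v
  have hexpnorm : ∀ t : ℝ, ‖Complex.exp (2 * Real.pi * Complex.I * (t:ℂ))‖ = 1 := by
    intro t
    rw [Complex.norm_exp]
    simp
  have h2pinorm : ‖(2 * (Real.pi:ℂ) * Complex.I)‖ = 2 * Real.pi := by
    simp [map_mul,
      abs_of_pos Real.pi_pos]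
  have hM : ∀ u ∈ Set.Icc a b, ∀ v ∈ Set.Icc a b, ‖∫ x in u..v, ψ x‖ ≤ 1 := by
    intro u hu v hv
    rw [hFTC u hu v hv]
    have h1 : ∀ t : ℝ, ‖Complex.exp (2 * Real.pi * Complex.I * (t:ℂ)) /
        (2 * Real.pi * Complex.I)‖ = 1 / (2 * Real.pi) := by
      intro t
      rw [norm_div, hexpnorm, h2pinorm]
    calc ‖_ - _‖ ≤ _ + _ := norm_sub_le _ _
      _ ≤ 1 := by
        rw [h1, h1]
        have := Real.pi_gt_three
        rw [← add_div]
        rw [div_le_one (by linarith)]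
        linarith
  
  set Φ : ℝ → ℝ := fun x => φ x - φ a with hΦ
  have hΦmono : Monotone Φ := fun x y hxy => by simp only [hΦ]; linarith [hφmono hxy]
  have hΦcont : Continuous Φ := hφcont.sub continuous_const
  have hΦa : Φ a = 0 := by simp [hΦ]
  have hΦnonneg : ∀ x, a ≤ x → 0 ≤ Φ x := by
    intro x hx
    rw [← hΦa]
    exact hΦmono hx
  have hΦble : Φ b ≤ 2 * (H / h) := by
    have h1 := hφb a
    have h2 := hφb b
    simp only [hΦ]
    rw [abs_le] at h1 h2
    linarith [h1.1, h2.2]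
  -- rewrite the integral
  have hIeq : (∫ x in a..b, (G x : ℂ) * Complex.exp (2 * Real.pi * Complex.I * (F x)))
      = ∫ x in Set.Ioc a b, φ x • ψ x := by
    rw [intervalIntegral.integral_of_le hab.le]
    apply setIntegral_congr_fun measurableSet_Ioc
    intro x hx
    have hx' : x ∈ Set.Icc a b := Set.Ioc_subset_Icc_self hx
    have hcx : c x = x := hcid x hx'
    have hne : (F' x : ℂ) ≠ 0 := by
      have := hF'pos x
      rw [hcx] at this
      exact_mod_cast this.ne'
    simp only [hφ, hψ, hcx, real_smul, Complex.ofReal_div]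
    field_simp
  have hψint : IntegrableOn ψ (Set.Ioc a b) := hψcont.integrableOn_Ioc
  have hΦψint : IntegrableOn (fun x => Φ x • ψ x) (Set.Ioc a b) :=
    (hΦcont.smul hψcont).integrableOn_Ioc
  have hsplit : (∫ x in Set.Ioc a b, φ x • ψ x)
      = φ a • (∫ x in Set.Ioc a b, ψ x) + ∫ x in Set.Ioc a b, Φ x • ψ x := by
    have h1 : IntegrableOn (fun x => φ a • ψ x) (Set.Ioc a b) := hψint.smul (φ a)
    calc (∫ x in Set.Ioc a b, φ x • ψ x)
        = ∫ x in Set.Ioc a b, (φ a • ψ x + Φ x • ψ x) :=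
          setIntegral_congr_fun measurableSet_Ioc (fun x _ => by
            simp only [hΦ, sub_smul]; abel)
      _ = (∫ x in Set.Ioc a b, φ a • ψ x) + ∫ x in Set.Ioc a b, Φ x • ψ x :=
          integral_add h1 hΦψint
      _ = φ a • (∫ x in Set.Ioc a b, ψ x) + ∫ x in Set.Ioc a b, Φ x • ψ x := by
          rw [integral_smul]
  -- Term 1 bound
  have hIocint : ∀ u v : ℝ, u ≤ v → (∫ x in Set.Ioc u v, ψ x) = ∫ x in u..v, ψ x :=
    fun u v huv => (intervalIntegral.integral_of_le huv).symm
  have hterm1 : ‖φ a • (∫ x in Set.Ioc a b, ψ x)‖ ≤ H / h := by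
    rw [norm_smul, hIocint a b hab.le]
    calc ‖φ a‖ * ‖∫ x in a..b, ψ x‖ ≤ (H / h) * 1 := by
          apply mul_le_mul (hφb a) (hM a (Set.left_mem_Icc.2 hab.le) b (Set.right_mem_Icc.2 hab.le))
            (norm_nonneg _) (by positivity)
      _ = H / h := mul_one _
  -- Term 2: Fubini
  set S : Set ℝ := Set.Ioo 0 (Φ b) with hS
  set f : ℝ → ℝ → ℂ := fun x s => if s < Φ x then ψ x else 0 with hf
  obtain ⟨K, hK⟩ : ∃ K : ℝ, ∀ x ∈ Set.Icc a b, ‖F' x‖ ≤ K :=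
    isCompact_Icc.exists_bound_of_continuousOn hF'c
  have hψbd : ∀ x, ‖ψ x‖ ≤ K := by
    intro x
    simp only [hψ]
    rw [norm_mul, hexpnorm, mul_one, Complex.norm_real]
    exact hK _ (hcmem x)
  have hK0 : 0 ≤ K := le_trans (norm_nonneg _) (hψbd a)
  haveI hfin1 : IsFiniteMeasure (volume.restrict (Set.Ioc a b)) :=
    ⟨by rw [Measure.restrict_apply_univ]; exact measure_Ioc_lt_top⟩
  haveI hfin2 : IsFiniteMeasure (volume.restrict S) :=
    ⟨by rw [Measure.restrict_apply_univ]; exact measure_Ioo_lt_top⟩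
  have huncurry : Function.uncurry f =
      Set.indicator {p : ℝ × ℝ | p.2 < Φ p.1} (fun p => ψ p.1) := by
    funext p
    by_cases hp : p.2 < Φ p.1 <;>
      simp [Function.uncurry, hf, Set.indicator, hp]
  have hopen : IsOpen {p : ℝ × ℝ | p.2 < Φ p.1} :=
    isOpen_lt continuous_snd (hΦcont.comp continuous_fst)
  have hfmeas : StronglyMeasurable (Function.uncurry f) := by
    rw [huncurry]
    exact ((hψcont.comp continuous_fst).stronglyMeasurable).indicator hopen.measurableSet
  have hfint : Integrable (Function.uncurry f)
      ((volume.restrict (Set.Ioc a b)).prod (volume.restrict S)) := by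
    apply Integrable.mono' (integrable_const K) hfmeas.aestronglyMeasurable
    apply Filter.Eventually.of_forall
    intro p
    by_cases hp : p.2 < Φ p.1
    · simpa [Function.uncurry, hf, hp] using hψbd p.1
    · simp [Function.uncurry, hf, hp, hK0]
  have hlayer : ∀ x ∈ Set.Ioc a b, Φ x • ψ x = ∫ s in S, f x s := by
    intro x hx
    have hfx : (fun s => f x s) = Set.indicator (Set.Iio (Φ x)) (fun _ => ψ x) := by
      funext s
      by_cases hs : s < Φ x <;> simp [hf, Set.indicator, hs]
    rw [hfx, setIntegral_indicator measurableSet_Iio, setIntegral_const]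
    congr 1
    rw [hS, Set.Ioo_inter_Iio, min_eq_right (hΦmono hx.2),
      Real.volume_real_Ioo_of_le (by linarith [hΦnonneg x hx.1.le])]
    ring
  have hterm2eq : (∫ x in Set.Ioc a b, Φ x • ψ x)
      = ∫ s in S, ∫ x in Set.Ioc a b, f x s := by
    rw [setIntegral_congr_fun measurableSet_Ioc hlayer]
    exact integral_integral_swap hfint
  have hinner : ∀ s ∈ S, ‖∫ x in Set.Ioc a b, f x s‖ ≤ 1 := by
    intro s hs
    obtain ⟨hs0, hsb⟩ := hs
    set U : Set ℝ := {x | s < Φ x} with hU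
    have hbU : b ∈ U := hsb
    have hUa : ∀ x ∈ U, a ≤ x := by
      intro x hx
      by_contra hlt
      push_neg at hlt
      have : Φ x ≤ Φ a := hΦmono hlt.le
      rw [hΦa] at this
      exact absurd hx (by simp [hU]; linarith)
    have hUbdd : BddBelow U := ⟨a, hUa⟩
    set c₀ := sInf U with hc₀
    have hc₀a : a ≤ c₀ := le_csInf ⟨b, hbU⟩ hUa
    have hc₀b : c₀ ≤ b := csInf_le hUbdd hbU
    have hsub1 : Set.Ioc c₀ b ⊆ Set.Ioc a b ∩ U := by
      intro x hx
      have hxU : x ∈ U := by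
        obtain ⟨u, huU, hux⟩ := exists_lt_of_csInf_lt ⟨b, hbU⟩ hx.1
        have : Φ u ≤ Φ x := hΦmono hux.le
        simp only [hU, Set.mem_setOf_eq] at huU ⊢
        linarith
      exact ⟨⟨lt_of_le_of_lt hc₀a hx.1, hx.2⟩, hxU⟩
    have hsub2 : Set.Ioc a b ∩ U ⊆ Set.Icc c₀ b := by
      intro x hx
      exact ⟨csInf_le hUbdd hx.2, hx.1.2⟩
    have haeeq : (Set.Ioc a b ∩ U : Set ℝ) =ᵐ[volume] Set.Ioc c₀ b := by
      rw [MeasureTheory.ae_eq_set]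
      constructor
      · apply measure_mono_null (t := {c₀})
        · intro x hx
          have h1 := hsub2 hx.1
          have h2 := hx.2
          simp only [Set.mem_Ioc, not_and, not_le, not_lt] at h2
          simp only [Set.mem_singleton_iff]
          rcases lt_or_eq_of_le h1.1 with hlt | heq
          · exact absurd (h2 hlt) (not_lt.2 h1.2)
          · exact heq.symm
        · exact measure_singleton _
      · rw [Set.diff_eq_empty.2 hsub1]
        exact measure_empty
    have hUmeas : MeasurableSet U := (isOpen_lt continuous_const hΦcont).measurableSet
    have hfind : (fun x => f x s) = Set.indicator U ψ := by
      funext x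
      by_cases hx : s < Φ x <;> simp [hf, hU, Set.indicator, hx]
    rw [hfind, setIntegral_indicator hUmeas, setIntegral_congr_set haeeq,
      hIocint c₀ b hc₀b]
    exact hM c₀ ⟨hc₀a, hc₀b⟩ b (Set.right_mem_Icc.2 hab.le)
  have hterm2 : ‖∫ x in Set.Ioc a b, Φ x • ψ x‖ ≤ 2 * (H / h) := by
    rw [hterm2eq]
    calc ‖∫ s in S, ∫ x in Set.Ioc a b, f x s‖ ≤ 1 * (volume S).toReal :=
          norm_setIntegral_le_of_norm_le_const measure_Ioo_lt_top hinner
      _ ≤ 2 * (H / h) := by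
          rw [one_mul, hS, Real.volume_Ioo,
            ENNReal.toReal_ofReal (by simpa using hΦnonneg b hab.le)]
          simpa using hΦble
  -- combine
  rw [hIeq, hsplit]
  calc ‖_ + _‖ ≤ _ + _ := norm_add_le _ _
    _ ≤ H / h + 2 * (H / h) := add_le_add hterm1 hterm2
    _ = 3 * H / h := by ring


private lemma key2 (a b H h : ℝ) (F F' G : ℝ → ℝ) (hab : a < b) (hH : 0 < H) (hh : 0 < h)
    (hGc : ContinuousOn G (Set.Icc a b))
    (hGb : ∀ x ∈ Set.Icc a b, |G x| ≤ H)
    (hF : ∀ x ∈ Set.Icc a b, HasDerivAt F (F' x) x)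
    (hF'c : ContinuousOn F' (Set.Icc a b))
    (hmono : MonotoneOn (fun x => G x / F' x) (Set.Icc a b) ∨
      AntitoneOn (fun x => G x / F' x) (Set.Icc a b))
    (hpos : ∀ x ∈ Set.Icc a b, h ≤ F' x) :
    ‖∫ x in a..b, (G x : ℂ) * Complex.exp (2 * Real.pi * Complex.I * (F x))‖ ≤ 3 * H / h := by
  rcases hmono with hm | ha
  · exact key a b H h F F' G hab hH hh hGc hGb hF hF'c hm hpos
  · have hm' : MonotoneOn (fun x => (-G x) / F' x) (Set.Icc a b) := by
      have := ha.neg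
      refine fun x hx y hy hxy => ?_
      have h2 := this hx hy hxy
      simpa [neg_div] using h2
    have h2 := key a b H h F F' (fun x => -G x) hab hH hh hGc.neg
      (fun x hx => by simpa using hGb x hx) hF hF'c hm' hpos
    have heq : (∫ x in a..b, ((-G x : ℝ) : ℂ) * Complex.exp (2 * Real.pi * Complex.I * (F x)))
        = -∫ x in a..b, (G x : ℂ) * Complex.exp (2 * Real.pi * Complex.I * (F x)) := by
      rw [← intervalIntegral.integral_neg]
      congr 1
      funext x
      push_cast
      ring
    rw [heq, norm_neg] at h2
    exact h2

theorem stmt10 :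
    ∃ C : ℝ, 0 < C ∧ ∀ (a b H h : ℝ) (F F' G : ℝ → ℝ),
      a < b → 0 < H → 0 < h →
      ContinuousOn G (Set.Icc a b) →
      (∀ x ∈ Set.Icc a b, |G x| ≤ H) →
      (∀ x ∈ Set.Icc a b, HasDerivAt F (F' x) x) →
      ContinuousOn F' (Set.Icc a b) →
      (MonotoneOn (fun x => G x / F' x) (Set.Icc a b) ∨
        AntitoneOn (fun x => G x / F' x) (Set.Icc a b)) →
      ((∀ x ∈ Set.Icc a b, h ≤ F' x) ∨ (∀ x ∈ Set.Icc a b, F' x ≤ -h)) →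
      ‖∫ x in a..b, (G x : ℂ) *
          Complex.exp (2 * Real.pi * Complex.I * (F x))‖
        ≤ C * H / h := by
  refine ⟨3, by norm_num, ?_⟩
  intro a b H h F F' G hab hH hh hGc hGb hF hF'c hmono hsign
  rcases hsign with hpos | hneg
  · exact key2 a b H h F F' G hab hH hh hGc hGb hF hF'c hmono hpos
  · -- conjugation: replace F by -F
    have hF2 : ∀ x ∈ Set.Icc a b, HasDerivAt (fun y => -F y) (-F' x) x :=
      fun x hx => (hF x hx).neg
    have hmono2 : MonotoneOn (fun x => G x / (-F' x)) (Set.Icc a b) ∨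
        AntitoneOn (fun x => G x / (-F' x)) (Set.Icc a b) := by
      rcases hmono with hm | ha
      · right
        intro x hx y hy hxy
        have := hm hx hy hxy
        simp only [div_neg]
        linarith
      · left
        intro x hx y hy hxy
        have := ha hx hy hxy
        simp only [div_neg]
        linarith
    have hpos2 : ∀ x ∈ Set.Icc a b, h ≤ -F' x := fun x hx => by linarith [hneg x hx]
    have h2 := key2 a b H h (fun y => -F y) (fun x => -F' x) G hab hH hh hGc hGb hF2
      hF'c.neg hmono2 hpos2
    have hconj : (∫ x in a..b, (G x : ℂ) *
          Complex.exp (2 * Real.pi * Complex.I * ((fun y => -F y) x)))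
        = (starRingEnd ℂ) (∫ x in a..b, (G x : ℂ) *
          Complex.exp (2 * Real.pi * Complex.I * (F x))) := by
      rw [intervalIntegral.integral_of_le hab.le, intervalIntegral.integral_of_le hab.le,
        ← integral_conj]
      apply integral_congr_ae
      apply Filter.Eventually.of_forall
      intro x
      simp only [map_mul, Complex.conj_ofReal, ← Complex.exp_conj]
      congr 2
      simp only [map_mul, Complex.conj_ofReal, Complex.conj_I, map_ofNat]
      push_cast
      ring
    rw [hconj] at h2
    rwa [RCLike.norm_conj] at h2
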